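/- Let h be the sparsified h-wave table for strings A, B with parameter ℓ, where in addition to the ℓ-step transitions, h[i,j] may be set to h[i-1,j] + d whenever ED(A[h[i-1,j]+1, h[i-1,j]+d], B[h[i-1,j]+j+1, h[i-1,j]+j+d]) ≤ 10ℓ. Then for all i, j with h[i,j] ≠ -∞, we have ED(A[1, h[i,j]], B[1, h[i,j]+j]) ≤ 10iℓ + |j|. -/

import Mathlib

/-- Costs of the edit operations (as `Levenshtein.Cost` in the older Mathlib). -/
structure Levenshtein.Cost (α β δ : Type*) where
  delete : α → δ
  insert : β → δ
  substitute : α → β → δ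

/-- Unit costs (as `Levenshtein.defaultCost` in the older Mathlib). -/
def Levenshtein.defaultCost {α : Type*} [DecidableEq α] : Levenshtein.Cost α α ℕ where
  delete _ := 1
  insert _ := 1
  substitute a b := if a = b then 0 else 1

/-- Levenshtein distance, by the recurrence the older Mathlib proved for `levenshtein`. -/
def levenshtein {α β δ : Type*} [AddZeroClass δ] [Min δ] (C : Levenshtein.Cost α β δ) :
    List α → List β → δ
  | [], ys => (ys.map C.insert).sum
  | x :: xs, [] => C.delete x + levenshtein C xs []
  | x :: xs, y :: ys => min (C.delete x + levenshtein C xs (y :: ys))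
      (min (C.insert y + levenshtein C (x :: xs) ys) (C.substitute x y + levenshtein C xs ys))

/-- Edit distance (Levenshtein distance with unit costs). -/
def ED {α : Type*} [DecidableEq α] (A B : List α) : ℕ :=
  levenshtein Levenshtein.defaultCost A B

section LevAux
variable {α β δ : Type*} [AddZeroClass δ] [Min δ] (C : Levenshtein.Cost α β δ)

@[simp] theorem levenshtein_nil_nil : levenshtein C [] [] = 0 := by
  simp [levenshtein]

@[simp] theorem levenshtein_nil_cons (y : β) (ys : List β) :
    levenshtein C [] (y :: ys) = C.insert y + levenshtein C [] ys := by
  simp [levenshtein]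

@[simp] theorem levenshtein_cons_nil (x : α) (xs : List α) :
    levenshtein C (x :: xs) [] = C.delete x + levenshtein C xs [] := by
  simp [levenshtein]

theorem levenshtein_cons_cons (x : α) (xs : List α) (y : β) (ys : List β) :
    levenshtein C (x :: xs) (y :: ys) = min (C.delete x + levenshtein C xs (y :: ys))
      (min (C.insert y + levenshtein C (x :: xs) ys) (C.substitute x y + levenshtein C xs ys)) := by
  rw [levenshtein]

end LevAux

section Aux
variable {α : Type*} [DecidableEq α]

lemma ED_ins (xs : List α) (y : α) (ys : List α) : ED xs (y :: ys) ≤ 1 + ED xs ys := by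
  cases xs with
  | nil => simp [ED, Levenshtein.defaultCost]
  | cons x xs =>
    unfold ED
    rw [levenshtein_cons_cons]
    refine le_trans (min_le_right _ _) (le_trans (min_le_left _ _) ?_)
    simp [Levenshtein.defaultCost, ED]

lemma ED_del (x : α) (xs ys : List α) : ED (x :: xs) ys ≤ 1 + ED xs ys := by
  cases ys with
  | nil => simp [ED, Levenshtein.defaultCost]
  | cons y ys =>
    unfold ED
    rw [levenshtein_cons_cons]
    refine le_trans (min_le_left _ _) ?_
    simp [Levenshtein.defaultCost, ED]

lemma ED_sub (x y : α) (xs ys : List α) :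
    ED (x :: xs) (y :: ys) ≤ (if x = y then 0 else 1) + ED xs ys := by
  unfold ED
  rw [levenshtein_cons_cons]
  refine le_trans (min_le_right _ _) (le_trans (min_le_right _ _) ?_)
  simp [Levenshtein.defaultCost, ED]

lemma ED_append_le (a b c e : List α) : ED (a ++ c) (b ++ e) ≤ ED a b + ED c e := by
  induction a generalizing b with
  | nil =>
    induction b with
    | nil => simp
    | cons y ys ih =>
      simp only [List.nil_append] at *
      calc ED c (y :: (ys ++ e)) ≤ 1 + ED c (ys ++ e) := ED_ins _ _ _
        _ ≤ 1 + (ED ([] : List α) ys + ED c e) := by omega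
        _ = ED ([] : List α) (y :: ys) + ED c e := by
            simp [ED, Levenshtein.defaultCost]; omega
  | cons x xs ihx =>
    induction b with
    | nil =>
      calc ED (x :: (xs ++ c)) e ≤ 1 + ED (xs ++ c) e := ED_del _ _ _
        _ ≤ 1 + (ED xs ([] : List α) + ED c e) := by
            have := ihx ([] : List α); simp at this; omega
        _ = ED (x :: xs) ([] : List α) + ED c e := by
            simp [ED, Levenshtein.defaultCost]; omega
    | cons y ys ihy =>
      have h1 : ED (x :: (xs ++ c)) (y :: (ys ++ e)) ≤
          (1 + ED xs (y :: ys)) + ED c e := by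
        have := ihx (y :: ys)
        have := ED_del x (xs ++ c) (y :: (ys ++ e))
        simp only [List.cons_append] at *
        omega
      have h2 : ED (x :: (xs ++ c)) (y :: (ys ++ e)) ≤
          (1 + ED (x :: xs) ys) + ED c e := by
        have := ihy
        have := ED_ins (x :: (xs ++ c)) y (ys ++ e)
        simp only [List.cons_append] at *
        omega
      have h3 : ED (x :: (xs ++ c)) (y :: (ys ++ e)) ≤
          ((if x = y then 0 else 1) + ED xs ys) + ED c e := by
        have := ihx ys
        have := ED_sub x y (xs ++ c) (ys ++ e)
        simp only [List.cons_append] at *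
        omega
      have hmin : ED (x :: xs) (y :: ys) =
          min (1 + ED xs (y :: ys)) (min (1 + ED (x :: xs) ys)
            ((if x = y then 0 else 1) + ED xs ys)) := by
        simp [ED, Levenshtein.defaultCost, levenshtein_cons_cons]
      simp only [List.cons_append]
      omega

lemma ED_le_lengths (a b : List α) : ED a b ≤ a.length + b.length := by
  induction a generalizing b with
  | nil =>
    induction b with
    | nil => simp [ED]
    | cons y ys ih =>
      have := ED_ins ([] : List α) y ys
      simp at *; omega
  | cons x xs ih =>
    have := ED_del x xs b
    have := ih b
    simp; omega

lemma ED_step (A B : List α) (m n : ℤ) (a b : ℕ)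
    (hm : 0 ≤ m) (hn : 0 ≤ n) :
    ED (A.take (m + a).toNat) (B.take (n + b).toNat) ≤
      ED (A.take m.toNat) (B.take n.toNat) +
      ED ((A.drop m.toNat).take a) ((B.drop n.toNat).take b) := by
  have h1 : (m + (a : ℤ)).toNat = m.toNat + a := by omega
  have h2 : (n + (b : ℤ)).toNat = n.toNat + b := by omega
  rw [h1, h2, List.take_add, List.take_add]
  exact ED_append_le _ _ _ _

lemma ED_step_len (A B : List α) (m n : ℤ) (a b : ℕ)
    (hm : 0 ≤ m) (hn : 0 ≤ n) :
    ED (A.take (m + a).toNat) (B.take (n + b).toNat) ≤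
      ED (A.take m.toNat) (B.take n.toNat) + a + b := by
  have := ED_step A B m n a b hm hn
  have h2 := ED_le_lengths ((A.drop m.toNat).take a) ((B.drop n.toNat).take b)
  have h3 := List.length_take_le a (A.drop m.toNat)
  have h4 := List.length_take_le b (B.drop n.toNat)
  omega

end Aux

/-- Invariant of the sparsified h-wave with shortcut transitions (Lemma A.4): in the
table `h : ℕ → ℤ → WithBot ℤ` (value `⊥` denoting `-∞`, cells indexed by `i ∈ [0,k]`
and `j` a multiple of `ℓ` in `[-k,k]`), where each finite cell with `i ≥ 1` arises from
one of the allowed transitions — an `ℓ`-step from `j`, `j-ℓ` or `j+ℓ`, or a shortcut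
`h[i-1,j] + d` whose corresponding windows of `A` and `B` are within edit distance
`10ℓ` — every finite value `h[i,j] = v` satisfies
`ED(A[1,v], B[1,v+j]) ≤ 10iℓ + |j|`.  (Prefixes are expressed with `List.take`.) -/
theorem hwave_invariant {α : Type*} [DecidableEq α] (k ℓ : ℕ) (hℓ : 1 ≤ ℓ)
    (A B : List α) (h : ℕ → ℤ → WithBot ℤ)
    (h00 : h 0 0 = (0 : ℤ))
    (h0 : ∀ j : ℤ, j ≠ 0 → h 0 j = ⊥)
    (htrans : ∀ i : ℕ, ∀ j : ℤ, 1 ≤ i → i ≤ k → (ℓ : ℤ) ∣ j → |j| ≤ (k : ℤ) →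
      h i j ≠ ⊥ →
      (h i j = h (i - 1) j + ((ℓ : ℤ) : WithBot ℤ)) ∨
      (-(k : ℤ) ≤ j - ℓ ∧ h i j = h (i - 1) (j - ℓ) + ((ℓ : ℤ) : WithBot ℤ)) ∨
      (j + ℓ ≤ (k : ℤ) ∧ h i j = h (i - 1) (j + ℓ) + ((ℓ : ℤ) : WithBot ℤ)) ∨
      (∃ d : ℕ, h i j = h (i - 1) j + ((d : ℤ) : WithBot ℤ) ∧
        ∀ v : ℤ, h (i - 1) j = (v : WithBot ℤ) →
          ED ((A.drop v.toNat).take d) ((B.drop (v + j).toNat).take d) ≤ 10 * ℓ)) :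
    ∀ i : ℕ, ∀ j : ℤ, i ≤ k → (ℓ : ℤ) ∣ j → |j| ≤ (k : ℤ) →
      ∀ v : ℤ, h i j = (v : WithBot ℤ) →
      (ED (A.take v.toNat) (B.take (v + j).toNat) : ℤ) ≤ 10 * i * ℓ + |j| := by
  suffices H : ∀ i : ℕ, ∀ j : ℤ, i ≤ k → (ℓ : ℤ) ∣ j → |j| ≤ (k : ℤ) →
      ∀ v : ℤ, h i j = (v : WithBot ℤ) →
      0 ≤ v ∧ 0 ≤ v + j ∧
      (ED (A.take v.toNat) (B.take (v + j).toNat) : ℤ) ≤ 10 * i * ℓ + |j| by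
    intro i j hik hdvd hjk v hv
    exact (H i j hik hdvd hjk v hv).2.2
  intro i
  induction i with
  | zero =>
    intro j _ _ _ v hv
    by_cases hj : j = 0
    · subst hj
      rw [h00] at hv
      have hv0 : v = 0 := by exact_mod_cast hv.symm
      subst hv0
      refine ⟨le_refl _, by simp, ?_⟩
      simp [ED]
    · rw [h0 j hj] at hv
      exact absurd hv.symm (by simp)
  | succ n ih =>
    intro j hik hdvd hjk v hv
    have hne : h (n + 1) j ≠ ⊥ := by rw [hv]; exact WithBot.coe_ne_bot
    have habsj : |j| ≤ (k : ℤ) := hjk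
    have hℓ' : (1 : ℤ) ≤ (ℓ : ℤ) := by exact_mod_cast hℓ
    have hring : (10 : ℤ) * ((n : ℤ) + 1) * ℓ = 10 * n * ℓ + 10 * ℓ := by ring
    rcases htrans (n + 1) j (by omega) hik hdvd hjk hne with hc | ⟨hb, hc⟩ | ⟨hb, hc⟩ |
        ⟨d, hc, hed⟩
    · -- vertical: from (n, j), step ℓ
      simp only [Nat.add_sub_cancel] at hc
      have hprev : h n j ≠ ⊥ := by
        intro hbot; rw [hbot] at hc; simp [hv] at hc
      obtain ⟨w, hw⟩ := WithBot.ne_bot_iff_exists.mp hprev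
      rw [← hw, hv] at hc
      have hvw : v = w + ℓ := by exact_mod_cast hc
      obtain ⟨hw0, hwj, hED⟩ := ih j (by omega) hdvd hjk w hw.symm
      refine ⟨by omega, by omega, ?_⟩
      have key := ED_step_len A B w (w + j) ℓ ℓ hw0 hwj
      have hT1 : v.toNat = (w + (ℓ : ℤ)).toNat := by omega
      have hT2 : (v + j).toNat = ((w + j) + (ℓ : ℤ)).toNat := by omega
      rw [hT1, hT2]
      push_cast
      push_cast at hED key
      linarith
    · -- diagonal: from (n, j - ℓ)
      simp only [Nat.add_sub_cancel] at hc
      have hprev : h n (j - ℓ) ≠ ⊥ := by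
        intro hbot; rw [hbot] at hc; simp [hv] at hc
      obtain ⟨w, hw⟩ := WithBot.ne_bot_iff_exists.mp hprev
      rw [← hw, hv] at hc
      have hvw : v = w + ℓ := by exact_mod_cast hc
      have hdvd' : (ℓ : ℤ) ∣ (j - ℓ) := by
        exact dvd_sub hdvd (dvd_refl _)
      have hjk' : |j - ℓ| ≤ (k : ℤ) := by
        rw [abs_le] at *; omega
      obtain ⟨hw0, hwj, hED⟩ := ih (j - ℓ) (by omega) hdvd' hjk' w hw.symm
      refine ⟨by omega, by omega, ?_⟩
      have key := ED_step_len A B w (w + (j - ℓ)) ℓ (2 * ℓ) hw0 hwj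
      have hT1 : v.toNat = (w + (ℓ : ℤ)).toNat := by omega
      have hT2 : (v + j).toNat = ((w + (j - ℓ)) + ((2 * ℓ : ℕ) : ℤ)).toNat := by
        push_cast; omega
      rw [hT1, hT2]
      have habs : |j - (ℓ : ℤ)| ≤ |j| + ℓ := by
        calc |j - (ℓ : ℤ)| ≤ |j| + |(ℓ : ℤ)| := abs_sub _ _
          _ = |j| + ℓ := by rw [abs_of_nonneg (by linarith : (0:ℤ) ≤ (ℓ:ℤ))]
      push_cast
      push_cast at hED key
      linarith
    · -- diagonal: from (n, j + ℓ)
      simp only [Nat.add_sub_cancel] at hc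
      have hprev : h n (j + ℓ) ≠ ⊥ := by
        intro hbot; rw [hbot] at hc; simp [hv] at hc
      obtain ⟨w, hw⟩ := WithBot.ne_bot_iff_exists.mp hprev
      rw [← hw, hv] at hc
      have hvw : v = w + ℓ := by exact_mod_cast hc
      have hdvd' : (ℓ : ℤ) ∣ (j + ℓ) := by
        exact dvd_add hdvd (dvd_refl _)
      have hjk' : |j + ℓ| ≤ (k : ℤ) := by
        rw [abs_le] at *; omega
      obtain ⟨hw0, hwj, hED⟩ := ih (j + ℓ) (by omega) hdvd' hjk' w hw.symm
      refine ⟨by omega, by omega, ?_⟩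
      have key := ED_step_len A B w (w + (j + ℓ)) ℓ 0 hw0 hwj
      have hT1 : v.toNat = (w + (ℓ : ℤ)).toNat := by omega
      have hT2 : (v + j).toNat = ((w + (j + ℓ)) + ((0 : ℕ) : ℤ)).toNat := by
        push_cast; omega
      rw [hT1, hT2]
      have habs : |j + (ℓ : ℤ)| ≤ |j| + ℓ := by
        calc |j + (ℓ : ℤ)| ≤ |j| + |(ℓ : ℤ)| := abs_add_le _ _
          _ = |j| + ℓ := by
              rw [abs_of_nonneg (by linarith : (0:ℤ) ≤ (ℓ:ℤ))]
      push_cast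
      push_cast at hED key
      linarith
    · -- shortcut: from (n, j), step d with ED bound
      simp only [Nat.add_sub_cancel] at hc hed
      have hprev : h n j ≠ ⊥ := by
        intro hbot; rw [hbot] at hc; simp [hv] at hc
      obtain ⟨w, hw⟩ := WithBot.ne_bot_iff_exists.mp hprev
      rw [← hw, hv] at hc
      have hvw : v = w + d := by exact_mod_cast hc
      obtain ⟨hw0, hwj, hED⟩ := ih j (by omega) hdvd hjk w hw.symm
      refine ⟨by omega, by omega, ?_⟩
      have hwin := hed w hw.symm
      have key := ED_step A B w (w + j) d d hw0 hwj
      have hT1 : v.toNat = (w + (d : ℤ)).toNat := by omega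
      have hT2 : (v + j).toNat = ((w + j) + (d : ℤ)).toNat := by omega
      rw [hT1, hT2]
      push_cast
      push_cast at hED key hwin
      linarith
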